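/- With T = Σ_{i=0}^{n−1} h_i ⊗ Λ_i + d ⊗ c and T̃ = (1/n)(ρ ⊗ c + c ⊗ ρ − ((n²−1)/12) c ⊗ c), both elements of 𝔥 ⊗ 𝔥, one has Σ_{k=1}^{n} (τ^k ⊗ id)(T − T̃) = 0. -/

import Mathlib

open scoped TensorProduct
open Fin.NatCast

noncomputable section

/-- The Cartan matrix of affine type `A^{(1)}_{n-1}` (with the convention
`a₀₁ = a₁₀ = -2` when `n = 2`). -/
def cartanA1 (n : ℕ) [NeZero n] (i j : Fin n) : ℂ :=
  (if i = j then 2 else 0) + (if i + 1 = j then -1 else 0) + (if j + 1 = i then -1 else 0)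

/-- With `T = Σ_{i} h_i ⊗ Λ_i + d ⊗ c` and
`T̃ = (1/n)(ρ ⊗ c + c ⊗ ρ - ((n²-1)/12) c ⊗ c)`, one has
`Σ_{k=1}^{n} (τ^k ⊗ id)(T - T̃) = 0`. -/
theorem sum_tau_T_minus_Ttilde (n : ℕ) [NeZero n] (hn : 2 ≤ n)
    (H : Type*) [AddCommGroup H] [Module ℂ H]
    (B : H →ₗ[ℂ] H →ₗ[ℂ] ℂ) (hBsymm : ∀ x y : H, B x y = B y x)
    (h : Fin n → H) (d : H) (Λ : Fin n → H) (c ρ : H)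
    (bas : Module.Basis (Fin (n + 1)) ℂ H)
    (hbash : ∀ i : Fin n, bas i.castSucc = h i)
    (hbasd : bas (Fin.last n) = d)
    (hhh : ∀ i j : Fin n, B (h i) (h j) = cartanA1 n i j)
    (hhd : ∀ i : Fin n, B (h i) d = if i = 0 then 1 else 0)
    (hdd : B d d = 0)
    (hΛh : ∀ i j : Fin n, B (Λ i) (h j) = if i = j then 1 else 0)
    (hΛd : ∀ i : Fin n, B (Λ i) d = 0)
    (hch : ∀ j : Fin n, B c (h j) = 0)
    (hcd : B c d = 1)
    (hc : c = ∑ i : Fin n, h i)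
    (hρ : ρ = ∑ i : Fin n, Λ i)
    (τ : H →ₗ[ℂ] H)
    (hτh : ∀ i : Fin n, τ (h i) = h (i + 1))
    (hτρ : τ ρ = ρ) :
    ∑ k ∈ Finset.Icc 1 n,
      TensorProduct.map (τ ^ k) LinearMap.id
        (((∑ i : Fin n, h i ⊗ₜ[ℂ] Λ i) + d ⊗ₜ[ℂ] c) -
          (n : ℂ)⁻¹ • (ρ ⊗ₜ[ℂ] c + c ⊗ₜ[ℂ] ρ -
            (((n : ℂ) ^ 2 - 1) / 12) • (c ⊗ₜ[ℂ] c))) = 0 := by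
  have hn0 : (n : ℂ) ≠ 0 := Nat.cast_ne_zero.mpr (NeZero.ne n)
  set s : Fin n → ℂ := fun j => (j.val : ℂ) * ((n : ℂ) - (j.val : ℂ)) / 2 with hs
  -- nondegeneracy via the dual basis
  have key0 : ∀ x : H, (∀ i : Fin n, B x (h i) = 0) → B x d = 0 → x = 0 := by
    intro x hxh hxd
    have hall : ∀ y : H, B x y = 0 := by
      intro y
      conv_lhs => rw [← bas.sum_repr y]
      rw [map_sum]
      refine Finset.sum_eq_zero fun m _ => ?_
      rw [map_smul]
      induction m using Fin.lastCases with
      | last => rw [hbasd, hxd, smul_zero]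
      | cast i => rw [hbash, hxh, smul_zero]
    have hrep : ∀ m : Fin (n + 1), bas.repr x m = 0 := by
      intro m
      induction m using Fin.lastCases with
      | last =>
        have h1 : B x c = 0 := hall c
        have h2 : B x c = bas.repr x (Fin.last n) := by
          conv_lhs => rw [← bas.sum_repr x]
          rw [map_sum, LinearMap.sum_apply, Fin.sum_univ_castSucc]
          have : ∀ j : Fin n, (B ((bas.repr x) j.castSucc • bas j.castSucc)) c = 0 := by
            intro j
            rw [hbash, map_smul, LinearMap.smul_apply, hBsymm, hch, smul_zero]
          rw [Finset.sum_eq_zero fun j _ => this j, zero_add, hbasd, map_smul,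
            LinearMap.smul_apply, hBsymm, hcd, smul_eq_mul, mul_one]
        rw [← h2, h1]
      | cast i =>
        have h1 : B x (Λ i) = 0 := hall (Λ i)
        have h2 : B x (Λ i) = bas.repr x i.castSucc := by
          conv_lhs => rw [← bas.sum_repr x]
          rw [map_sum, LinearMap.sum_apply, Fin.sum_univ_castSucc]
          have hlast : (B ((bas.repr x) (Fin.last n) • bas (Fin.last n))) (Λ i) = 0 := by
            rw [hbasd, map_smul, LinearMap.smul_apply, hBsymm, hΛd, smul_zero]
          have hterm : ∀ j : Fin n, (B ((bas.repr x) j.castSucc • bas j.castSucc)) (Λ i)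
              = if j = i then bas.repr x j.castSucc else 0 := by
            intro j
            rw [hbash, map_smul, LinearMap.smul_apply, hBsymm, hΛh]
            by_cases hij : i = j <;> simp [hij, eq_comm]
          rw [hlast, add_zero, Finset.sum_congr rfl fun j _ => hterm j,
            Finset.sum_ite_eq' Finset.univ i (fun j => bas.repr x j.castSucc)]
          simp
        rw [← h2, h1]
    have := bas.sum_repr x
    simp only [hrep, zero_smul, Finset.sum_const_zero] at this
    exact this.symm
  have h1n : 1 % n = 1 := Nat.mod_eq_of_lt (by omega)
  have hvadd : ∀ m : Fin n, (m + 1).val = (m.val + 1) % n := by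
    intro m; rw [Fin.val_add, Fin.val_one', h1n]
  have hvsub : ∀ m : Fin n, (m - 1).val = (n - 1 + m.val) % n := by
    intro m; rw [Fin.sub_def]; simp only [Fin.val_one', h1n]
  have hcirc : ∀ m : Fin n, (∑ j : Fin n, s j * cartanA1 n j m)
      = 2 * s m - s (m - 1) - s (m + 1) := by
    intro m
    have e2 : ∀ j : Fin n, (j + 1 = m) ↔ (j = m - 1) := fun j => by
      rw [eq_sub_iff_add_eq]
    have e3 : ∀ j : Fin n, (m + 1 = j) ↔ (j = m + 1) := fun j => by rw [eq_comm]
    simp only [cartanA1, mul_add, e2, e3, mul_ite, mul_zero, mul_neg, mul_one]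
    rw [Finset.sum_add_distrib, Finset.sum_add_distrib,
      Finset.sum_ite_eq' Finset.univ m (fun j => s j * 2),
      Finset.sum_ite_eq' Finset.univ (m - 1) (fun j => -(s j)),
      Finset.sum_ite_eq' Finset.univ (m + 1) (fun j => -(s j))]
    simp only [Finset.mem_univ, if_true]
    ring
  have hval : ∀ m : Fin n, 2 * s m - s (m - 1) - s (m + 1)
      = 1 - (n : ℂ) * (if m = 0 then 1 else 0) := by
    intro m
    rcases eq_or_ne m 0 with rfl | hm0
    · have ha : ((0 : Fin n) + 1).val = 1 := by rw [hvadd]; simp [h1n]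
      have hb : ((0 : Fin n) - 1).val = n - 1 := by
        rw [hvsub]
        simp only [Fin.val_zero, Nat.add_zero]
        exact Nat.mod_eq_of_lt (by omega)
      have hz : ((0 : Fin n)).val = 0 := rfl
      simp only [hs, ha, hb, hz, if_true]
      have hc1 : ((n - 1 : ℕ) : ℂ) = (n : ℂ) - 1 := by
        push_cast [Nat.cast_sub (by omega : 1 ≤ n)]; ring
      rw [hc1]
      push_cast
      ring
    · have hm0' : m.val ≠ 0 := fun hh => hm0 (Fin.ext hh)
      rw [if_neg hm0]
      rcases eq_or_ne m.val (n - 1) with hml | hml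
      · have ha : (m + 1).val = 0 := by
          rw [hvadd, hml]
          have e : n - 1 + 1 = n := by omega
          rw [e, Nat.mod_self]
        have hb : (m - 1).val = n - 2 := by
          rw [hvsub, hml]
          have e : n - 1 + (n - 1) = n + (n - 2) := by omega
          rw [e, Nat.add_mod_left]
          exact Nat.mod_eq_of_lt (by omega)
        simp only [hs, ha, hb, hml]
        have hc1 : ((n - 1 : ℕ) : ℂ) = (n : ℂ) - 1 := by
          push_cast [Nat.cast_sub (by omega : 1 ≤ n)]; ring
        have hc2 : ((n - 2 : ℕ) : ℂ) = (n : ℂ) - 2 := by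
          push_cast [Nat.cast_sub (by omega : 2 ≤ n)]; ring
        rw [hc1, hc2]
        push_cast
        ring
      · have ha : (m + 1).val = m.val + 1 := by
          rw [hvadd]; exact Nat.mod_eq_of_lt (by omega)
        have hb : (m - 1).val = m.val - 1 := by
          rw [hvsub]
          have : n - 1 + m.val = n + (m.val - 1) := by omega
          rw [this, Nat.add_mod_left]
          exact Nat.mod_eq_of_lt (by omega)
        simp only [hs, ha, hb]
        have hc1 : ((m.val - 1 : ℕ) : ℂ) = (m.val : ℂ) - 1 := by
          push_cast [Nat.cast_sub (by omega : 1 ≤ m.val)]; ring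
        rw [hc1]
        push_cast
        ring
  have hρexp : ρ = (∑ j : Fin n, s j • h j) + (n : ℂ) • d := by
    rw [← sub_eq_zero]
    apply key0
    · intro m
      rw [map_sub, map_add, LinearMap.sub_apply, LinearMap.add_apply]
      have e1 : B ρ (h m) = 1 := by
        rw [hρ, map_sum, LinearMap.sum_apply]
        simp [hΛh]
      have e2 : (B ((∑ j : Fin n, s j • h j))) (h m)
          = 2 * s m - s (m - 1) - s (m + 1) := by
        rw [map_sum, LinearMap.sum_apply, ← hcirc m]
        refine Finset.sum_congr rfl fun j _ => ?_
        rw [map_smul, LinearMap.smul_apply, hhh, smul_eq_mul]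
      have e3 : (B ((n : ℂ) • d)) (h m) = (n : ℂ) * (if m = 0 then 1 else 0) := by
        rw [map_smul, LinearMap.smul_apply, hBsymm, hhd, smul_eq_mul]
      rw [e1, e2, e3, hval m]
      ring
    · rw [map_sub, map_add, LinearMap.sub_apply, LinearMap.add_apply]
      have e1 : B ρ d = 0 := by
        rw [hρ, map_sum, LinearMap.sum_apply]
        simp [hΛd]
      have e2 : (B ((∑ j : Fin n, s j • h j))) d = 0 := by
        rw [map_sum, LinearMap.sum_apply]
        have : ∀ j : Fin n, (B (s j • h j)) d = if j = 0 then s j else 0 := by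
          intro j
          rw [map_smul, LinearMap.smul_apply, hhd, smul_eq_mul]
          by_cases hj : j = 0 <;> simp [hj]
        rw [Finset.sum_congr rfl fun j _ => this j,
          Finset.sum_ite_eq' Finset.univ 0 (fun j => s j)]
        simp [hs]
      have e3 : (B ((n : ℂ) • d)) d = 0 := by
        rw [map_smul, LinearMap.smul_apply, hdd, smul_zero]
      rw [e1, e2, e3]
      ring
  have hd : d = (n : ℂ)⁻¹ • (ρ - ∑ j : Fin n, s j • h j) := by
    rw [hρexp, add_sub_cancel_left, smul_smul, inv_mul_cancel₀ hn0, one_smul]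
  have hτc : τ c = c := by
    rw [hc, map_sum]
    simp only [hτh]
    exact Fintype.sum_equiv (Equiv.addRight 1) _ _ (fun i => rfl)
  have hτkh : ∀ (k : ℕ) (i : Fin n), (τ ^ k) (h i) = h (i + (k : Fin n)) := by
    intro k
    induction k with
    | zero => intro i; simp
    | succ k ih =>
      intro i
      rw [pow_succ, Module.End.mul_apply, hτh, ih]
      congr 1
      push_cast
      abel
  have hτkρ : ∀ k : ℕ, (τ ^ k) ρ = ρ := by
    intro k; induction k with
    | zero => simp
    | succ k ih => rw [pow_succ, Module.End.mul_apply, hτρ, ih]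
  have hτkc : ∀ k : ℕ, (τ ^ k) c = c := by
    intro k; induction k with
    | zero => simp
    | succ k ih => rw [pow_succ, Module.End.mul_apply, hτc, ih]
  have hshift : ∀ j : Fin n, (∑ k ∈ Finset.Icc 1 n, h (j + (k : Fin n))) = c := by
    intro j
    rw [show Finset.Icc 1 n = Finset.Ico 1 (n + 1) from rfl, Finset.sum_Ico_eq_sum_range]
    have e : n + 1 - 1 = n := by omega
    rw [e, ← Fin.sum_univ_eq_sum_range (fun k : ℕ => h (j + ((1 + k : ℕ) : Fin n))) n, hc]
    apply Fintype.sum_equiv (Equiv.addLeft (j + 1))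
    intro i
    show h (j + ((1 + (i : ℕ) : ℕ) : Fin n)) = h (j + 1 + i)
    congr 1
    push_cast
    abel
  have gauss : ∀ N : ℕ, (∑ j ∈ Finset.range N, (j : ℂ)) * 2 = (N : ℂ) * ((N : ℂ) - 1) := by
    intro N
    induction N with
    | zero => simp
    | succ N ih =>
      rw [Finset.sum_range_succ]
      push_cast
      linear_combination ih
  have key : ∀ N : ℕ, (∑ j ∈ Finset.range N, (j : ℂ) * ((N : ℂ) - (j : ℂ)))
      = (N : ℂ) * ((N : ℂ) ^ 2 - 1) / 6 := by
    intro N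
    induction N with
    | zero => simp
    | succ N ih =>
      have e : (∑ j ∈ Finset.range N, (j : ℂ) * (((N + 1 : ℕ) : ℂ) - (j : ℂ)))
          = (∑ j ∈ Finset.range N, (j : ℂ) * ((N : ℂ) - (j : ℂ)))
            + ∑ j ∈ Finset.range N, (j : ℂ) := by
        rw [← Finset.sum_add_distrib]
        refine Finset.sum_congr rfl fun j _ => ?_
        push_cast
        ring
      rw [Finset.sum_range_succ, e, ih]
      have g2 : (∑ j ∈ Finset.range N, (j : ℂ)) = (N : ℂ) * ((N : ℂ) - 1) / 2 := by
        linear_combination (gauss N) / 2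
      rw [g2]
      push_cast
      ring
  have hS : (∑ j : Fin n, s j) = (n : ℂ) * ((n : ℂ) ^ 2 - 1) / 12 := by
    have e1 : (∑ j : Fin n, s j)
        = ∑ t ∈ Finset.range n, (t : ℂ) * ((n : ℂ) - (t : ℂ)) / 2 :=
      Fin.sum_univ_eq_sum_range (fun t => (t : ℂ) * ((n : ℂ) - (t : ℂ)) / 2) n
    rw [e1, ← Finset.sum_div, key n]
    ring
  have hsumd : (∑ k ∈ Finset.Icc 1 n, (τ ^ k) d)
      = ρ - (((n : ℂ) ^ 2 - 1) / 12) • c := by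
    have hτkd : ∀ k : ℕ, (τ ^ k) d
        = (n : ℂ)⁻¹ • (ρ - ∑ j : Fin n, s j • h (j + (k : Fin n))) := by
      intro k
      rw [hd, map_smul, map_sub, hτkρ, map_sum]
      congr 2
      refine Finset.sum_congr rfl fun j _ => ?_
      rw [map_smul, hτkh]
    calc (∑ k ∈ Finset.Icc 1 n, (τ ^ k) d)
        = ∑ k ∈ Finset.Icc 1 n,
            (n : ℂ)⁻¹ • (ρ - ∑ j : Fin n, s j • h (j + (k : Fin n))) :=
          Finset.sum_congr rfl fun k _ => hτkd k
      _ = (n : ℂ)⁻¹ • ((Finset.Icc 1 n).card • ρ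
            - ∑ j : Fin n, s j • (∑ k ∈ Finset.Icc 1 n, h (j + (k : Fin n)))) := by
          rw [← Finset.smul_sum, Finset.sum_sub_distrib, Finset.sum_const, Finset.sum_comm]
          congr 2
          refine Finset.sum_congr rfl fun j _ => ?_
          rw [Finset.smul_sum]
      _ = ρ - (((n : ℂ) ^ 2 - 1) / 12) • c := by
          rw [Finset.sum_congr rfl fun j (_ : j ∈ Finset.univ) => by rw [hshift j],
            ← Finset.sum_smul, hS, Nat.card_Icc]
          have e : n + 1 - 1 = n := by omega
          rw [e, smul_sub, ← Nat.cast_smul_eq_nsmul ℂ n ρ, smul_smul, smul_smul,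
            inv_mul_cancel₀ hn0, one_smul]
          congr 1
          field_simp

  have hmapk : ∀ k ∈ Finset.Icc 1 n,
      TensorProduct.map (τ ^ k) LinearMap.id
        (((∑ i : Fin n, h i ⊗ₜ[ℂ] Λ i) + d ⊗ₜ[ℂ] c) -
          (n : ℂ)⁻¹ • (ρ ⊗ₜ[ℂ] c + c ⊗ₜ[ℂ] ρ -
            (((n : ℂ) ^ 2 - 1) / 12) • (c ⊗ₜ[ℂ] c)))
      = ((∑ i : Fin n, h (i + (k : Fin n)) ⊗ₜ[ℂ] Λ i) + ((τ ^ k) d) ⊗ₜ[ℂ] c) -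
          (n : ℂ)⁻¹ • (ρ ⊗ₜ[ℂ] c + c ⊗ₜ[ℂ] ρ -
            (((n : ℂ) ^ 2 - 1) / 12) • (c ⊗ₜ[ℂ] c)) := by
    intro k _
    rw [map_sub, map_add, map_sum, map_smul, map_sub, map_add, map_smul]
    simp only [TensorProduct.map_tmul, LinearMap.id_coe, id_eq, hτkh, hτkρ, hτkc]
  rw [Finset.sum_congr rfl hmapk, Finset.sum_sub_distrib, Finset.sum_add_distrib,
    Finset.sum_const, Nat.card_Icc]
  have p1 : (∑ k ∈ Finset.Icc 1 n, ∑ i : Fin n, h (i + (k : Fin n)) ⊗ₜ[ℂ] Λ i)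
      = c ⊗ₜ[ℂ] ρ := by
    rw [Finset.sum_comm]
    have e : ∀ i : Fin n,
        (∑ k ∈ Finset.Icc 1 n, h (i + (k : Fin n)) ⊗ₜ[ℂ] Λ i) = c ⊗ₜ[ℂ] Λ i := by
      intro i
      rw [← TensorProduct.sum_tmul, hshift]
    rw [Finset.sum_congr rfl fun i _ => e i, ← TensorProduct.tmul_sum, ← hρ]
  have p2 : (∑ k ∈ Finset.Icc 1 n, ((τ ^ k) d) ⊗ₜ[ℂ] c)
      = ρ ⊗ₜ[ℂ] c - (((n : ℂ) ^ 2 - 1) / 12) • (c ⊗ₜ[ℂ] c) := by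
    rw [← TensorProduct.sum_tmul, hsumd, TensorProduct.sub_tmul, TensorProduct.smul_tmul']
  rw [p1, p2]
  have e : n + 1 - 1 = n := by omega
  rw [e, ← Nat.cast_smul_eq_nsmul ℂ n, smul_smul, mul_inv_cancel₀ hn0, one_smul]
  abel

end
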